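/- arXiv:2210.17499 — 2 statements merged into one kernel-verified Lean document; each statement's English description precedes it below -/
import Mathlib

section
/- Let $\Omega\subset\mathbb{R}^2$ be open, let $A:\Omega\to M_2(\mathbb{R})$ be $C^1$ with $\det A(x) \ne 0$ for all $x$, and let $u,\tilde{u}\in C^2(\Omega)$ satisfy $J\nabla\tilde{u} = A\nabla u$ pointwise, where $J=\begin{pmatrix}0 & -1\\ 1 & 0\end{pmatrix}$. If $\mathrm{div}(A\nabla u) = 0$ in $\Omega$, then $\mathrm{div}(\tilde{A}\nabla\tilde{u}) = 0$ in $\Omega$, where $\tilde{A} = A^{t}/\det A$. -/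
noncomputable section

open Matrix

/-- Partial derivative in the `i`-th coordinate direction. -/
def pd {n : ℕ} (i : Fin n) (f : EuclideanSpace ℝ (Fin n) → ℝ)
    (x : EuclideanSpace ℝ (Fin n)) : ℝ :=
  fderiv ℝ f x (EuclideanSpace.single i 1)

lemma pd_congr_nhds {n : ℕ} (i : Fin n) {f g : EuclideanSpace ℝ (Fin n) → ℝ}
    {x : EuclideanSpace ℝ (Fin n)} (h : f =ᶠ[nhds x] g) : pd i f x = pd i g x := by
  unfold pd; rw [h.fderiv_eq]

lemma pd_symm {n : ℕ} (i j : Fin n) {f : EuclideanSpace ℝ (Fin n) → ℝ}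
    {x : EuclideanSpace ℝ (Fin n)} (hf : ContDiffAt ℝ 2 f x) :
    pd i (fun y => pd j f y) x = pd j (fun y => pd i f y) x := by
  have hd : DifferentiableAt ℝ (fderiv ℝ f) x := by
    have := hf.fderiv_right (m := 1) (by norm_num)
    exact this.differentiableAt one_ne_zero
  have key : ∀ v w : EuclideanSpace ℝ (Fin n),
      pd i (fun y => fderiv ℝ f y w) x = fderiv ℝ (fderiv ℝ f) x (EuclideanSpace.single i 1) w := by
    intro v w
    unfold pd
    rw [fderiv_clm_apply hd (differentiableAt_const w)]
    simp
  have keyj : ∀ w : EuclideanSpace ℝ (Fin n),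
      pd j (fun y => fderiv ℝ f y w) x = fderiv ℝ (fderiv ℝ f) x (EuclideanSpace.single j 1) w := by
    intro w
    unfold pd
    rw [fderiv_clm_apply hd (differentiableAt_const w)]
    simp
  have hsymm : IsSymmSndFDerivAt ℝ f x := hf.isSymmSndFDerivAt (by norm_num)
  calc pd i (fun y => pd j f y) x
      = fderiv ℝ (fderiv ℝ f) x (EuclideanSpace.single i 1) (EuclideanSpace.single j 1) :=
        key 0 _
    _ = fderiv ℝ (fderiv ℝ f) x (EuclideanSpace.single j 1) (EuclideanSpace.single i 1) :=
        hsymm _ _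
    _ = pd j (fun y => pd i f y) x := (keyj _).symm

/-- Kenig–Rule conjugate identity in two dimensions: if `J ∇ũ = A ∇u` and
`div(A ∇u) = 0` in an open set `Ω`, then `div(Ã ∇ũ) = 0` in `Ω` where `Ã = Aᵀ / det A`. -/
theorem conjugate_solution {Ω : Set (EuclideanSpace ℝ (Fin 2))} (hΩ : IsOpen Ω)
    (A : EuclideanSpace ℝ (Fin 2) → Matrix (Fin 2) (Fin 2) ℝ)
    (hA : ∀ i j, ContDiffOn ℝ 1 (fun x => A x i j) Ω)
    (hdet : ∀ x ∈ Ω, (A x).det ≠ 0)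
    (u tu : EuclideanSpace ℝ (Fin 2) → ℝ)
    (hu : ContDiffOn ℝ 2 u Ω) (htu : ContDiffOn ℝ 2 tu Ω)
    (hconj : ∀ x ∈ Ω,
      (!![0, -1; 1, 0] : Matrix (Fin 2) (Fin 2) ℝ).mulVec (fun j => pd j tu x)
        = (A x).mulVec (fun j => pd j u x))
    (hsol : ∀ x ∈ Ω, ∑ i, pd i (fun y => ∑ j, A y i j * pd j u y) x = 0) :
    ∀ x ∈ Ω, ∑ i, pd i (fun y => ∑ j, (A y j i / (A y).det) * pd j tu y) x = 0 := by
  intro x hx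
  -- componentwise conjugate relations
  have h0 : ∀ y ∈ Ω, -(pd 1 tu y) = A y 0 0 * pd 0 u y + A y 0 1 * pd 1 u y := by
    intro y hy
    have := congrFun (hconj y hy) 0
    simpa [Matrix.mulVec, dotProduct, Fin.sum_univ_two, Matrix.vecHead, Matrix.vecTail] using this
  have h1 : ∀ y ∈ Ω, pd 0 tu y = A y 1 0 * pd 0 u y + A y 1 1 * pd 1 u y := by
    intro y hy
    have := congrFun (hconj y hy) 1
    simpa [Matrix.mulVec, dotProduct, Fin.sum_univ_two, Matrix.vecHead, Matrix.vecTail] using this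
  -- pointwise identification of Ã ∇ũ with (-J) ∇u on Ω
  have key0 : ∀ y ∈ Ω,
      (∑ j, (A y j 0 / (A y).det) * pd j tu y) = pd 1 u y := by
    intro y hy
    have hd := hdet y hy
    rw [Fin.sum_univ_two]
    have e0 := h0 y hy
    have e1 := h1 y hy
    have : pd 1 tu y = -(A y 0 0 * pd 0 u y + A y 0 1 * pd 1 u y) := by linarith
    rw [this, e1, Matrix.det_fin_two] at *
    field_simp
    ring
  have key1 : ∀ y ∈ Ω,
      (∑ j, (A y j 1 / (A y).det) * pd j tu y) = -(pd 0 u y) := by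
    intro y hy
    have hd := hdet y hy
    rw [Fin.sum_univ_two]
    have e0 := h0 y hy
    have e1 := h1 y hy
    have : pd 1 tu y = -(A y 0 0 * pd 0 u y + A y 0 1 * pd 1 u y) := by linarith
    rw [this, e1, Matrix.det_fin_two] at *
    field_simp
    ring
  have hmem : Ω ∈ nhds x := hΩ.mem_nhds hx
  have E0 : (fun y => ∑ j, (A y j 0 / (A y).det) * pd j tu y) =ᶠ[nhds x]
      (fun y => pd 1 u y) := Filter.eventually_of_mem hmem key0
  have E1 : (fun y => ∑ j, (A y j 1 / (A y).det) * pd j tu y) =ᶠ[nhds x]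
      (fun y => -(pd 0 u y)) := Filter.eventually_of_mem hmem key1
  rw [Fin.sum_univ_two, pd_congr_nhds 0 E0, pd_congr_nhds 1 E1]
  have hneg : pd 1 (fun y => -(pd 0 u y)) x = -(pd 1 (fun y => pd 0 u y) x) := by
    unfold pd
    rw [fderiv_fun_neg]
    simp
  rw [hneg, pd_symm 0 1 ((hu x hx).contDiffAt hmem)]
  ring
end
end

section
/- Let $(X,\mu)$ be a measure space and $N, G: X \to [0,\infty)$ measurable with $\int N^p\,d\mu < \infty$ for some $0<p<\infty$. Suppose there exist $\varepsilon\in(0,1)$ and $K\ge 0$ such that for all $\nu>0$: $\mu(\{N>\nu,\ G\le \nu\}) \le \varepsilon\,\mu(\{N>\nu/32\})$, with $32^p\,\varepsilon \le 1/2$. Then $\int_X N^p\,d\mu \le 2\cdot 32^p \int_X G^p\,d\mu$. -/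
open MeasureTheory

/-- The abstract good-λ mechanism: a level-set estimate
`μ{N > ν, G ≤ ν} ≤ ε μ{N > ν/32}` with `32^p ε ≤ 1/2` and `∫ N^p < ∞` yields
`∫ N^p ≤ 2 · 32^p ∫ G^p`. -/
theorem good_lambda_to_Lp {X : Type*} [MeasurableSpace X] (μ : Measure X)
    (N G : X → ℝ) (hN : Measurable N) (hG : Measurable G)
    (hNpos : ∀ x, 0 ≤ N x) (hGpos : ∀ x, 0 ≤ G x)
    (p : ℝ) (hp : 0 < p)
    (hfin : ∫⁻ x, ENNReal.ofReal (N x ^ p) ∂μ < ⊤)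
    (ε K : ℝ) (hε : 0 < ε) (hε1 : ε < 1) (hK : 0 ≤ K)
    (hgl : ∀ ν : ℝ, 0 < ν →
      μ {x | ν < N x ∧ G x ≤ ν} ≤ ENNReal.ofReal ε * μ {x | ν / 32 < N x})
    (hsmall : 32 ^ p * ε ≤ 1 / 2) :
    ∫⁻ x, ENNReal.ofReal (N x ^ p) ∂μ ≤
      ENNReal.ofReal (2 * 32 ^ p) * ∫⁻ x, ENNReal.ofReal (G x ^ p) ∂μ := by
  set A := ∫⁻ x, ENNReal.ofReal (N x ^ p) ∂μ with hA
  set B := ∫⁻ x, ENNReal.ofReal (G x ^ p) ∂μ with hB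
  have hNnn : 0 ≤ᵐ[μ] N := Filter.Eventually.of_forall hNpos
  have hGnn : 0 ≤ᵐ[μ] G := Filter.Eventually.of_forall hGpos
  have h32Nnn : 0 ≤ᵐ[μ] fun x => 32 * N x :=
    Filter.Eventually.of_forall fun x => by have := hNpos x; positivity
  have lcN := lintegral_rpow_eq_lintegral_meas_lt_mul μ hNnn hN.aemeasurable hp
  have lcG := lintegral_rpow_eq_lintegral_meas_lt_mul μ hGnn hG.aemeasurable hp
  have lc32N := lintegral_rpow_eq_lintegral_meas_lt_mul μ h32Nnn
    ((hN.const_mul 32).aemeasurable) hp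
  -- ∫ (32N)^p = ofReal (32^p) * A
  have h32 : (∫⁻ x, ENNReal.ofReal ((32 * N x) ^ p) ∂μ) = ENNReal.ofReal (32 ^ p) * A := by
    rw [hA, ← lintegral_const_mul' _ _ ENNReal.ofReal_ne_top]
    congr 1 with x
    rw [Real.mul_rpow (by norm_num) (hNpos x), ENNReal.ofReal_mul (by positivity)]
  -- measurability helpers
  have hrm : Measurable fun t : ℝ => ENNReal.ofReal (t ^ (p - 1)) := by fun_prop
  have hanti1 : Antitone fun t : ℝ => μ {x | t < 32 * N x} :=
    fun s t hst => measure_mono fun x hx => lt_of_le_of_lt hst hx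
  have hanti2 : Antitone fun t : ℝ => μ {x | t < G x} :=
    fun s t hst => measure_mono fun x hx => lt_of_le_of_lt hst hx
  have meas32N : Measurable fun t : ℝ => μ {x | t < 32 * N x} := hanti1.measurable
  have measG : Measurable fun t : ℝ => μ {x | t < G x} := hanti2.measurable
  -- pointwise bound on distribution function
  have key : ∀ t ∈ Set.Ioi (0:ℝ),
      μ {x | t < N x} * ENNReal.ofReal (t ^ (p - 1)) ≤
        ENNReal.ofReal ε * (μ {x | t < 32 * N x} * ENNReal.ofReal (t ^ (p - 1))) +
          μ {x | t < G x} * ENNReal.ofReal (t ^ (p - 1)) := by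
    intro t ht
    have ht0 : (0:ℝ) < t := ht
    have hsplit : μ {x | t < N x} ≤ μ {x | t < N x ∧ G x ≤ t} + μ {x | t < G x} := by
      refine le_trans (measure_mono ?_) (measure_union_le _ _)
      intro x hx
      by_cases h : G x ≤ t
      · exact Or.inl ⟨hx, h⟩
      · exact Or.inr (lt_of_not_ge h)
    have heq : {x | t / 32 < N x} = {x | t < 32 * N x} := by
      ext x; simp only [Set.mem_setOf_eq]
      rw [div_lt_iff₀ (by norm_num : (0:ℝ) < 32)]
      constructor <;> intro h <;> linarith
    have h1 : μ {x | t < N x} ≤ ENNReal.ofReal ε * μ {x | t < 32 * N x} + μ {x | t < G x} :=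
      calc μ {x | t < N x} ≤ μ {x | t < N x ∧ G x ≤ t} + μ {x | t < G x} := hsplit
        _ ≤ ENNReal.ofReal ε * μ {x | t / 32 < N x} + μ {x | t < G x} :=
            add_le_add_left (hgl t ht0) _
        _ = ENNReal.ofReal ε * μ {x | t < 32 * N x} + μ {x | t < G x} := by rw [heq]
    calc μ {x | t < N x} * ENNReal.ofReal (t ^ (p - 1))
        ≤ (ENNReal.ofReal ε * μ {x | t < 32 * N x} + μ {x | t < G x}) *
            ENNReal.ofReal (t ^ (p - 1)) := mul_le_mul_left h1 _
      _ = _ := by ring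
  -- integrate the pointwise bound
  have hint : ∫⁻ t in Set.Ioi (0:ℝ), μ {x | t < N x} * ENNReal.ofReal (t ^ (p - 1)) ≤
      ENNReal.ofReal ε * (∫⁻ t in Set.Ioi (0:ℝ),
        μ {x | t < 32 * N x} * ENNReal.ofReal (t ^ (p - 1))) +
      ∫⁻ t in Set.Ioi (0:ℝ), μ {x | t < G x} * ENNReal.ofReal (t ^ (p - 1)) := by
    calc ∫⁻ t in Set.Ioi (0:ℝ), μ {x | t < N x} * ENNReal.ofReal (t ^ (p - 1))
        ≤ ∫⁻ t in Set.Ioi (0:ℝ),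
            (ENNReal.ofReal ε * (μ {x | t < 32 * N x} * ENNReal.ofReal (t ^ (p - 1))) +
              μ {x | t < G x} * ENNReal.ofReal (t ^ (p - 1))) :=
          setLIntegral_mono (((meas32N.mul hrm).const_mul _).add (measG.mul hrm)) key
      _ = _ := by
          rw [lintegral_add_left (f := fun t : ℝ =>
              ENNReal.ofReal ε * (μ {x | t < 32 * N x} * ENNReal.ofReal (t ^ (p - 1))))
              ((meas32N.mul hrm).const_mul _),
            lintegral_const_mul' _ _ ENNReal.ofReal_ne_top]
  -- assemble: A ≤ ofReal ε * ofReal (32^p) * A + B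
  have main : A ≤ ENNReal.ofReal ε * (ENNReal.ofReal (32 ^ p) * A) + B := by
    calc A = ENNReal.ofReal p *
          ∫⁻ t in Set.Ioi (0:ℝ), μ {x | t < N x} * ENNReal.ofReal (t ^ (p - 1)) := lcN
      _ ≤ ENNReal.ofReal p * (ENNReal.ofReal ε * (∫⁻ t in Set.Ioi (0:ℝ),
            μ {x | t < 32 * N x} * ENNReal.ofReal (t ^ (p - 1))) +
            ∫⁻ t in Set.Ioi (0:ℝ), μ {x | t < G x} * ENNReal.ofReal (t ^ (p - 1))) :=
          mul_le_mul_right hint _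
      _ = ENNReal.ofReal ε * (ENNReal.ofReal p * ∫⁻ t in Set.Ioi (0:ℝ),
            μ {x | t < 32 * N x} * ENNReal.ofReal (t ^ (p - 1))) +
            ENNReal.ofReal p * ∫⁻ t in Set.Ioi (0:ℝ),
              μ {x | t < G x} * ENNReal.ofReal (t ^ (p - 1)) := by ring
      _ = ENNReal.ofReal ε * (ENNReal.ofReal (32 ^ p) * A) + B := by
          rw [← lc32N, ← lcG, h32, hB]
  have habsorb : A ≤ ENNReal.ofReal (1/2) * A + B := by
    refine main.trans (add_le_add_left ?_ _)
    rw [← mul_assoc, ← ENNReal.ofReal_mul hε.le]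
    exact mul_le_mul_left (ENNReal.ofReal_le_ofReal (by linarith [hsmall])) _
  -- cancel
  have hhalf : ENNReal.ofReal (1/2) = 1/2 := by
    rw [ENNReal.ofReal_div_of_pos (by norm_num)]; norm_num
  have h2A : 2 * A ≤ A + 2 * B := by
    calc 2 * A ≤ 2 * (ENNReal.ofReal (1/2) * A + B) := mul_le_mul_right habsorb _
      _ = 2 * 2⁻¹ * A + 2 * B := by rw [hhalf, mul_add, ← mul_assoc]; norm_num
      _ = A + 2 * B := by
          rw [ENNReal.mul_inv_cancel (by norm_num) (by norm_num), one_mul]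
  have hA2B : A ≤ 2 * B := by
    have h := h2A
    rw [two_mul A] at h
    exact (ENNReal.add_le_add_iff_left hfin.ne).mp h
  refine hA2B.trans (mul_le_mul_left ?_ _)
  have h1le : (1:ℝ) ≤ 32 ^ p := Real.one_le_rpow (by norm_num) hp.le
  have : (2:ENNReal) = ENNReal.ofReal 2 := by norm_num
  rw [this]
  exact ENNReal.ofReal_le_ofReal (by nlinarith)
end
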